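/- Let n ≥ 3 and realize S_{2n} as the group of permutations of the 2n-element set {1,…,n} ⊔ {1^∗,…,n^∗}. Let θ be the involution exchanging i and i^∗ for every i, and let H_n be the centralizer of θ in S_{2n} (the hyperoctahedral group (ℤ/2ℤ)^n ⋊ S_n). Let κ be the n-cycle (1 2 ⋯ n) fixing every i^∗, let κ^∗ be the n-cycle (1^∗ 2^∗ ⋯ n^∗) fixing every i, and let ω_H be the permutation sending i ↦ n+1−i and i^∗ ↦ (n+1−i)^∗. Then the stabilizer in H_n of the left coset κH_n ∈ S_{2n}/H_n, namely H_n ∩ κH_nκ^{−1}, equals the subgroup generated by κκ^∗ and θω_H, and this subgroup is isomorphic to the dihedral group of order 2n. -/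

import Mathlib

open scoped Pointwise

/-!
STATEMENT 17: In `S_{2n}`, realized as the permutations of `{1,…,n} ⊔ {1^∗,…,n^∗}`,
the stabilizer in the hyperoctahedral group `H_n` (the centralizer of the
involution `θ : i ↔ i^∗`) of the left coset `κH_n`, namely `H_n ∩ κH_nκ⁻¹`,
equals the subgroup generated by `κκ^∗` and `θω_H`, and this subgroup is
isomorphic to the dihedral group of order `2n`.
-/

/-- The involution `θ` exchanging `i` and `i^∗`. -/
def theta (n : ℕ) : Equiv.Perm (Fin n ⊕ Fin n) := Equiv.sumComm (Fin n) (Fin n)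

/-- The hyperoctahedral group `H_n = (ℤ/2ℤ)^n ⋊ S_n`, as the centralizer of `θ`. -/
def Hn (n : ℕ) : Subgroup (Equiv.Perm (Fin n ⊕ Fin n)) :=
  Subgroup.centralizer {theta n}

/-- The `n`-cycle `κ = (1 2 ⋯ n)` fixing every `i^∗`. -/
def kappa (n : ℕ) : Equiv.Perm (Fin n ⊕ Fin n) :=
  Equiv.sumCongr (finRotate n) (Equiv.refl (Fin n))

/-- The `n`-cycle `κ^∗ = (1^∗ 2^∗ ⋯ n^∗)` fixing every `i`. -/
def kappaStar (n : ℕ) : Equiv.Perm (Fin n ⊕ Fin n) :=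
  Equiv.sumCongr (Equiv.refl (Fin n)) (finRotate n)

/-- `ω_H : i ↦ n+1−i, i^∗ ↦ (n+1−i)^∗`. -/
def omegaH (n : ℕ) : Equiv.Perm (Fin n ⊕ Fin n) :=
  Equiv.sumCongr (Fin.revPerm) (Fin.revPerm)

namespace Statement17Aux

open Fin.NatCast Fin.CommRing

def aP (m : ℕ) : Equiv.Perm (Fin (m+1) ⊕ Fin (m+1)) := kappa (m+1) * kappaStar (m+1)
def bP (m : ℕ) : Equiv.Perm (Fin (m+1) ⊕ Fin (m+1)) := theta (m+1) * omegaH (m+1)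
/-- `θ' = κ θ κ⁻¹`. -/
def tP (m : ℕ) : Equiv.Perm (Fin (m+1) ⊕ Fin (m+1)) :=
  kappa (m+1) * theta (m+1) * (kappa (m+1))⁻¹

variable {m : ℕ}

@[simp] lemma theta_inl (x : Fin (m+1)) : theta (m+1) (Sum.inl x) = Sum.inr x := rfl
@[simp] lemma theta_inr (x : Fin (m+1)) : theta (m+1) (Sum.inr x) = Sum.inl x := rfl
@[simp] lemma kappa_inl (x : Fin (m+1)) : kappa (m+1) (Sum.inl x) = Sum.inl (x+1) := by
  simp [kappa]
@[simp] lemma kappa_inr (x : Fin (m+1)) : kappa (m+1) (Sum.inr x) = Sum.inr x := rfl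
@[simp] lemma kappa_inv_inl (x : Fin (m+1)) : (kappa (m+1))⁻¹ (Sum.inl x) = Sum.inl (x-1) := by
  rw [Equiv.Perm.inv_eq_iff_eq]; simp [sub_add_cancel]
@[simp] lemma kappa_inv_inr (x : Fin (m+1)) : (kappa (m+1))⁻¹ (Sum.inr x) = Sum.inr x := by
  rw [Equiv.Perm.inv_eq_iff_eq]; rfl
@[simp] lemma a_inl (x : Fin (m+1)) : aP m (Sum.inl x) = Sum.inl (x + 1) := by
  simp [aP, kappa, kappaStar]
@[simp] lemma a_inr (x : Fin (m+1)) : aP m (Sum.inr x) = Sum.inr (x + 1) := by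
  simp [aP, kappa, kappaStar]
@[simp] lemma b_inl (x : Fin (m+1)) : bP m (Sum.inl x) = Sum.inr x.rev := by
  simp [bP, theta, omegaH]
@[simp] lemma b_inr (x : Fin (m+1)) : bP m (Sum.inr x) = Sum.inl x.rev := by
  simp [bP, theta, omegaH]
@[simp] lemma t_inl (x : Fin (m+1)) : tP m (Sum.inl x) = Sum.inr (x - 1) := by
  simp [tP, Equiv.Perm.mul_apply]
@[simp] lemma t_inr (x : Fin (m+1)) : tP m (Sum.inr x) = Sum.inl (x + 1) := by
  simp [tP, Equiv.Perm.mul_apply]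

lemma apow_inl (k : ℕ) (x : Fin (m+1)) :
    ((aP m)^k) (Sum.inl x) = Sum.inl (x + (k : Fin (m+1))) := by
  induction k with
  | zero => simp
  | succ k ih =>
      rw [pow_succ', Equiv.Perm.mul_apply, ih, a_inl]
      congr 1
      push_cast
      ring

lemma apow_inr (k : ℕ) (x : Fin (m+1)) :
    ((aP m)^k) (Sum.inr x) = Sum.inr (x + (k : Fin (m+1))) := by
  induction k with
  | zero => simp
  | succ k ih =>
      rw [pow_succ', Equiv.Perm.mul_apply, ih, a_inr]
      congr 1
      push_cast
      ring

lemma orderOf_a : orderOf (aP m) = m + 1 := by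
  rw [orderOf_eq_iff (Nat.succ_pos m)]
  constructor
  · ext x
    rcases x with x | x <;> simp [apow_inl, apow_inr]
  · intro k hk hk0 h
    have := congrArg (fun f => f (Sum.inl (0 : Fin (m+1)))) h
    simp only [apow_inl, Equiv.Perm.one_apply, zero_add] at this
    have hv : ((k : Fin (m+1)) : ℕ) = k := Fin.val_cast_of_lt hk
    rw [Sum.inl.injEq] at this
    rw [this] at hv
    simp at hv
    omega

lemma b_mul_b : bP m * bP m = 1 := by
  ext x
  rcases x with x | x <;> simp [Equiv.Perm.mul_apply]

lemma b_inv : (bP m)⁻¹ = bP m := by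
  rw [inv_eq_iff_mul_eq_one]; exact b_mul_b

lemma a_inv_inl (x : Fin (m+1)) : (aP m)⁻¹ (Sum.inl x) = Sum.inl (x - 1) := by
  rw [Equiv.Perm.inv_eq_iff_eq]; simp [sub_add_cancel]
lemma a_inv_inr (x : Fin (m+1)) : (aP m)⁻¹ (Sum.inr x) = Sum.inr (x - 1) := by
  rw [Equiv.Perm.inv_eq_iff_eq]; simp [sub_add_cancel]

lemma bab : bP m * aP m * bP m = (aP m)⁻¹ := by
  ext x
  rcases x with x | x <;>
    simp [Equiv.Perm.mul_apply, a_inv_inl, a_inv_inr, sub_eq_add_neg, Fin.rev_add,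
      Fin.rev_rev, sub_neg_eq_add]

lemma key_conj (x : ℤ) : bP m * (aP m) ^ x * bP m = (aP m) ^ (-x) := by
  have h := map_zpow (MulAut.conj (bP m)) (aP m) x
  simp only [MulAut.conj_apply] at h
  calc bP m * (aP m) ^ x * bP m = bP m * (aP m) ^ x * (bP m)⁻¹ := by rw [b_inv]
    _ = (bP m * aP m * (bP m)⁻¹) ^ x := h
    _ = ((aP m)⁻¹) ^ x := by rw [b_inv, bab]
    _ = (aP m) ^ (-x) := by rw [inv_zpow, zpow_neg]

lemma a_comm_b (x : ℤ) : (aP m) ^ x * bP m = bP m * (aP m) ^ (-x) := by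
  calc (aP m) ^ x * bP m = bP m * (bP m * (aP m) ^ x * bP m) := by
        rw [← mul_assoc, ← mul_assoc, b_mul_b, one_mul]
    _ = bP m * (aP m) ^ (-x) := by rw [key_conj]

lemma zpow_eq_of_cast_eq (x y : ℤ) (hxy : (x : ZMod (m+1)) = y) :
    (aP m) ^ x = (aP m) ^ y := by
  rw [zpow_eq_zpow_iff_modEq, orderOf_a]
  exact (ZMod.intCast_eq_intCast_iff _ _ _).mp hxy

lemma cast_val_int (x : ZMod (m+1)) : (((x.val : ℤ)) : ZMod (m+1)) = x := by
  push_cast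
  exact ZMod.natCast_rightInverse x

/-- The homomorphism from the dihedral group. -/
def phi (m : ℕ) : DihedralGroup (m+1) →* Equiv.Perm (Fin (m+1) ⊕ Fin (m+1)) :=
  MonoidHom.mk' (fun x => match x with
    | DihedralGroup.r i => (aP m) ^ (i.val : ℤ)
    | DihedralGroup.sr i => bP m * (aP m) ^ (i.val : ℤ))
    (by
      rintro (i | i) (j | j) <;>
        simp only [DihedralGroup.r_mul_r, DihedralGroup.r_mul_sr,
          DihedralGroup.sr_mul_r, DihedralGroup.sr_mul_sr]
      · rw [← zpow_add]
        exact zpow_eq_of_cast_eq _ _ (by simp [cast_val_int])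
      · rw [← mul_assoc, a_comm_b, mul_assoc, ← zpow_add]
        congr 1
        exact zpow_eq_of_cast_eq _ _ (by simp [cast_val_int]; ring)
      · rw [mul_assoc, ← zpow_add]
        congr 1
        exact zpow_eq_of_cast_eq _ _ (by simp [cast_val_int])
      · rw [← mul_assoc, mul_assoc (bP m), a_comm_b, ← mul_assoc,
          b_mul_b, one_mul, ← zpow_add]
        exact zpow_eq_of_cast_eq _ _ (by simp [cast_val_int]; ring))

lemma phi_injective : Function.Injective (phi m) := by
  rw [injective_iff_map_eq_one]
  rintro (i | i) h
  · have h' : (aP m) ^ (i.val : ℤ) = 1 := h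
    rw [zpow_natCast] at h'
    have hd := orderOf_dvd_of_pow_eq_one h'
    rw [orderOf_a] at hd
    have h0 : i.val = 0 := Nat.eq_zero_of_dvd_of_lt hd (ZMod.val_lt i)
    rw [show i = 0 from (ZMod.val_eq_zero i).mp h0]
    rfl
  · exfalso
    have h' : (bP m * (aP m) ^ (i.val : ℤ)) = 1 := h
    have := congrArg (fun f => f (Sum.inl (0 : Fin (m+1)))) h'
    rw [zpow_natCast] at this
    simp only [Equiv.Perm.mul_apply, apow_inl, b_inl, Equiv.Perm.one_apply, zero_add] at this
    exact Sum.inr_ne_inl this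

lemma phi_range (hm : 0 < m) :
    (phi m).range = Subgroup.closure {aP m, bP m} := by
  apply le_antisymm
  · rintro x ⟨y, rfl⟩
    have ha : aP m ∈ Subgroup.closure {aP m, bP m} :=
      Subgroup.subset_closure (Set.mem_insert _ _)
    have hb : bP m ∈ Subgroup.closure {aP m, bP m} :=
      Subgroup.subset_closure (Set.mem_insert_of_mem _ rfl)
    rcases y with i | i
    · exact zpow_mem ha _
    · exact mul_mem hb (zpow_mem ha _)
  · rw [Subgroup.closure_le]
    rintro x (rfl | rfl)
    · refine ⟨DihedralGroup.r 1, ?_⟩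
      show (aP m) ^ (((1 : ZMod (m+1)).val : ℤ)) = aP m
      rw [ZMod.val_one_eq_one_mod, Nat.mod_eq_of_lt (by omega)]
      simp
    · refine ⟨DihedralGroup.sr 0, ?_⟩
      show bP m * (aP m) ^ (((0 : ZMod (m+1)).val : ℤ)) = bP m
      simp


lemma mem_Hn_iff (g : Equiv.Perm (Fin (m+1) ⊕ Fin (m+1))) :
    g ∈ Hn (m+1) ↔ theta (m+1) * g = g * theta (m+1) := by
  simp [Hn, Subgroup.mem_centralizer_iff]

lemma mem_conjmap_iff (g : Equiv.Perm (Fin (m+1) ⊕ Fin (m+1))) :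
    g ∈ Subgroup.map (MulAut.conj (kappa (m+1))).toMonoidHom (Hn (m+1)) ↔
      tP m * g = g * tP m := by
  constructor
  · rintro ⟨h, hh, rfl⟩
    rw [SetLike.mem_coe, mem_Hn_iff] at hh
    simp only [MulEquiv.coe_toMonoidHom, MulAut.conj_apply, tP]
    have h1 : theta (m+1) * (h * (kappa (m+1))⁻¹) = h * (theta (m+1) * (kappa (m+1))⁻¹) := by
      rw [← mul_assoc, hh, mul_assoc]
    simp only [mul_assoc, inv_mul_cancel_left, h1]
  · intro hcomm
    refine ⟨(kappa (m+1))⁻¹ * g * kappa (m+1), ?_, ?_⟩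
    · rw [SetLike.mem_coe, mem_Hn_iff]
      have h1 := congrArg (fun z => (kappa (m+1))⁻¹ * z * kappa (m+1)) hcomm
      simp only [tP, mul_assoc, inv_mul_cancel_left, inv_mul_cancel, mul_one] at h1
      simpa [mul_assoc] using h1
    · simp only [MulEquiv.coe_toMonoidHom, MulAut.conj_apply]
      simp [mul_assoc]

lemma rigidity (g : Equiv.Perm (Fin (m+1) ⊕ Fin (m+1)))
    (hth : theta (m+1) * g = g * theta (m+1)) (ht : tP m * g = g * tP m)
    (h0 : g (Sum.inl (0 : Fin (m+1))) = Sum.inl 0) : g = 1 := by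
  have hth' : ∀ x, theta (m+1) (g x) = g (theta (m+1) x) := fun x => by
    have := DFunLike.congr_fun hth x
    simpa [Equiv.Perm.mul_apply] using this
  have ht' : ∀ x, tP m (g x) = g (tP m x) := fun x => by
    have := DFunLike.congr_fun ht x
    simpa [Equiv.Perm.mul_apply] using this
  have key : ∀ k : ℕ, g (Sum.inl ((k : Fin (m+1)))) = Sum.inl (k : Fin (m+1)) := by
    intro k
    induction k with
    | zero => simpa using h0
    | succ k ih =>
        have e1 : (Sum.inl (((k:ℕ)+1 : ℕ) : Fin (m+1)) : Fin (m+1) ⊕ Fin (m+1)) =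
            tP m (theta (m+1) (Sum.inl ((k : Fin (m+1))))) := by
          simp only [theta_inl, t_inr]
          congr 1
          push_cast
          ring
        rw [e1, ← ht', ← hth', ih]
  have hinl : ∀ x : Fin (m+1), g (Sum.inl x) = Sum.inl x := fun x => by
    have := key x.val
    rwa [Fin.cast_val_eq_self] at this
  ext x
  rcases x with x | x
  · simp [hinl]
  · have h2 := hth' (Sum.inl x)
    rw [hinl] at h2
    simpa using h2.symm

lemma a_mem_Hn : aP m ∈ Hn (m+1) := by
  rw [mem_Hn_iff]
  ext x
  rcases x with x | x <;> simp [Equiv.Perm.mul_apply]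

lemma a_comm_t : tP m * aP m = aP m * tP m := by
  ext x
  rcases x with x | x <;>
    simp [Equiv.Perm.mul_apply, sub_add_cancel, add_sub_cancel_right, sub_add_eq_add_sub]

lemma b_mem_Hn : bP m ∈ Hn (m+1) := by
  rw [mem_Hn_iff]
  ext x
  rcases x with x | x <;> simp [Equiv.Perm.mul_apply]

lemma b_comm_t : tP m * bP m = bP m * tP m := by
  ext x
  rcases x with x | x <;>
    simp [Equiv.Perm.mul_apply, sub_eq_add_neg, Fin.rev_add, sub_neg_eq_add]

lemma a_mem_conj : aP m ∈ Subgroup.map (MulAut.conj (kappa (m+1))).toMonoidHom (Hn (m+1)) :=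
  (mem_conjmap_iff _).mpr a_comm_t
lemma b_mem_conj : bP m ∈ Subgroup.map (MulAut.conj (kappa (m+1))).toMonoidHom (Hn (m+1)) :=
  (mem_conjmap_iff _).mpr b_comm_t

lemma inf_le_closure :
    Hn (m+1) ⊓ Subgroup.map (MulAut.conj (kappa (m+1))).toMonoidHom (Hn (m+1)) ≤
      Subgroup.closure {aP m, bP m} := by
  intro g hg
  rw [Subgroup.mem_inf] at hg
  have hth := (mem_Hn_iff g).mp hg.1
  have ht := (mem_conjmap_iff g).mp hg.2
  have cth : Commute (theta (m+1)) (aP m) := (mem_Hn_iff _).mp a_mem_Hn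
  have ctt : Commute (tP m) (aP m) := a_comm_t
  have cbh : Commute (theta (m+1)) (bP m) := (mem_Hn_iff _).mp b_mem_Hn
  have cbt : Commute (tP m) (bP m) := b_comm_t
  have ha : aP m ∈ Subgroup.closure {aP m, bP m} :=
    Subgroup.subset_closure (Set.mem_insert _ _)
  have hb : bP m ∈ Subgroup.closure {aP m, bP m} :=
    Subgroup.subset_closure (Set.mem_insert_of_mem _ rfl)
  rcases hcase : g (Sum.inl (0 : Fin (m+1))) with k | k
  · -- g = aP ^ k.val
    set c := (aP m) ^ (k : Fin (m+1)).val with hc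
    have hgc : g = c := by
      have hd := rigidity (c⁻¹ * g)
        (((cth.pow_right _).inv_right.mul_right hth).eq)
        (((ctt.pow_right _).inv_right.mul_right ht).eq)
        (by
          rw [Equiv.Perm.mul_apply, hcase, Equiv.Perm.inv_eq_iff_eq, hc, apow_inl,
            zero_add, Fin.cast_val_eq_self])
      rw [inv_mul_eq_one] at hd
      exact hd.symm
    rw [hgc]
    exact pow_mem ha _
  · set c := bP m * (aP m) ^ ((Fin.rev k).val) with hc
    have hcin : c (Sum.inl (0 : Fin (m+1))) = Sum.inr k := by
      rw [hc, Equiv.Perm.mul_apply, apow_inl, zero_add, Fin.cast_val_eq_self, b_inl,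
        Fin.rev_rev]
    have hgc : g = c := by
      have hd := rigidity (c⁻¹ * g)
        (((cbh.mul_right (cth.pow_right _)).inv_right.mul_right hth).eq)
        (((cbt.mul_right (ctt.pow_right _)).inv_right.mul_right ht).eq)
        (by rw [Equiv.Perm.mul_apply, hcase, Equiv.Perm.inv_eq_iff_eq, hcin])
      rw [inv_mul_eq_one] at hd
      exact hd.symm
    rw [hgc]
    exact mul_mem hb (pow_mem ha _)

lemma closure_le_inf :
    Subgroup.closure {aP m, bP m} ≤
      Hn (m+1) ⊓ Subgroup.map (MulAut.conj (kappa (m+1))).toMonoidHom (Hn (m+1)) := by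
  rw [Subgroup.closure_le]
  rintro x (rfl | rfl)
  · exact ⟨a_mem_Hn, a_mem_conj⟩
  · exact ⟨b_mem_Hn, b_mem_conj⟩

end Statement17Aux

open Statement17Aux in
theorem statement17 (n : ℕ) (hn : 3 ≤ n) :
    -- the stabilizer of the coset `κH_n` in `H_n` is `H_n ∩ κH_nκ⁻¹` …
    (∀ h : Equiv.Perm (Fin n ⊕ Fin n), h ∈ Hn n →
      ((h * kappa n) • ((Hn n : Set (Equiv.Perm (Fin n ⊕ Fin n)))) =
          (kappa n) • ((Hn n : Set (Equiv.Perm (Fin n ⊕ Fin n)))) ↔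
        h ∈ Subgroup.map (MulAut.conj (kappa n)).toMonoidHom (Hn n))) ∧
    -- … and equals the subgroup generated by `κκ^∗` and `θω_H`
    Hn n ⊓ Subgroup.map (MulAut.conj (kappa n)).toMonoidHom (Hn n) =
      Subgroup.closure {kappa n * kappaStar n, theta n * omegaH n} ∧
    -- this subgroup is isomorphic to the dihedral group of order `2n`
    Nonempty
      ((Subgroup.closure {kappa n * kappaStar n, theta n * omegaH n} :
          Subgroup (Equiv.Perm (Fin n ⊕ Fin n))) ≃* DihedralGroup n) := by

  obtain ⟨m, rfl⟩ : ∃ m, n = m + 1 := ⟨n - 1, by omega⟩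
  have hm : 0 < m := by omega
  refine ⟨?_, ?_, ?_⟩
  · intro h _
    rw [leftCoset_eq_iff]
    constructor
    · intro hmem
      refine ⟨(kappa (m+1))⁻¹ * h * kappa (m+1), ?_, ?_⟩
      · have h2 := inv_mem hmem
        have e : ((h * kappa (m+1))⁻¹ * kappa (m+1))⁻¹ =
            (kappa (m+1))⁻¹ * h * kappa (m+1) := by group
        rwa [e] at h2
      · simp only [MulEquiv.coe_toMonoidHom, MulAut.conj_apply]
        group
    · rintro ⟨g, hg, rfl⟩
      have e : ((MulAut.conj (kappa (m+1))).toMonoidHom g * kappa (m+1))⁻¹ * kappa (m+1) =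
          g⁻¹ := by
        simp only [MulEquiv.coe_toMonoidHom, MulAut.conj_apply]
        group
      rw [e]
      exact inv_mem hg
  · exact le_antisymm inf_le_closure closure_le_inf
  · exact ⟨(MulEquiv.subgroupCongr (phi_range hm).symm).trans
      (MonoidHom.ofInjective phi_injective).symm⟩
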